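/- Let N ≥ 1, b_i, c_i ≥ 0 for i ∈ {1,...,N}, and define for each Λ ⊆ {1,...,N}: R(Λ) = log₂(1 + (1/(N+1))·Σ_{i∈Λᶜ} b_i) + log₂(1 + Σ_{i∈Λ} c_i) − 1, and U(Λ) = log₂(1 + Σ_{i∈Λᶜ} b_i) + log₂(1 + (Σ_{i∈Λ} √c_i)²). Then min_Λ R(Λ) ≥ min_Λ U(Λ) − (log₂(N+1) + log₂ N + 1). -/

import Mathlib

open Finset

theorem stmt_14 (N : ℕ) (hN : 1 ≤ N) (b c : Fin N → ℝ)
    (hb : ∀ i, 0 ≤ b i) (hc : ∀ i, 0 ≤ c i)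
    (R U : Finset (Fin N) → ℝ)
    (hR : ∀ Λ : Finset (Fin N), R Λ =
      Real.logb 2 (1 + (1 / (N + 1)) * ∑ i ∈ Λᶜ, b i)
        + Real.logb 2 (1 + ∑ i ∈ Λ, c i) - 1)
    (hU : ∀ Λ : Finset (Fin N), U Λ =
      Real.logb 2 (1 + ∑ i ∈ Λᶜ, b i)
        + Real.logb 2 (1 + (∑ i ∈ Λ, Real.sqrt (c i)) ^ 2)) :
    (⨅ Λ : Finset (Fin N), R Λ) ≥
      (⨅ Λ : Finset (Fin N), U Λ) - (Real.logb 2 (N + 1) + Real.logb 2 N + 1) := by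
  have hN1 : (1:ℝ) ≤ N := by exact_mod_cast hN
  have key : ∀ Λ : Finset (Fin N),
      R Λ ≥ U Λ - (Real.logb 2 (N + 1) + Real.logb 2 N + 1) := by
    intro Λ
    rw [hR, hU]
    set B := ∑ i ∈ Λᶜ, b i with hB
    set C := ∑ i ∈ Λ, c i with hC
    set S := ∑ i ∈ Λ, Real.sqrt (c i) with hS
    have hB0 : 0 ≤ B := Finset.sum_nonneg fun i _ => hb i
    have hC0 : 0 ≤ C := Finset.sum_nonneg fun i _ => hc i
    have hS0 : 0 ≤ S := Finset.sum_nonneg fun i _ => Real.sqrt_nonneg _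
    -- first term
    have h1 : Real.logb 2 (1 + B) ≤
        Real.logb 2 (N + 1) + Real.logb 2 (1 + (1 / (N + 1)) * B) := by
      rw [← Real.logb_mul (by positivity) (by positivity)]
      apply Real.logb_le_logb_of_le one_lt_two (by positivity)
      have : ((N:ℝ) + 1) * (1 + 1 / (N + 1) * B) = (N + 1) + B := by
        field_simp
      rw [this]; linarith
    -- second term: Cauchy-Schwarz
    have hcs : S ^ 2 ≤ N * C := by
      have := sq_sum_le_card_mul_sum_sq (s := Λ)
        (f := fun i => Real.sqrt (c i))
      calc S ^ 2 ≤ (Λ.card : ℝ) * ∑ i ∈ Λ, Real.sqrt (c i) ^ 2 := by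
            exact_mod_cast this
        _ ≤ (N:ℝ) * C := by
            rw [hC]
            have hsum : ∑ i ∈ Λ, Real.sqrt (c i) ^ 2 = ∑ i ∈ Λ, c i :=
              Finset.sum_congr rfl fun i _ => Real.sq_sqrt (hc i)
            rw [hsum]
            apply mul_le_mul_of_nonneg_right _ hC0
            exact_mod_cast Λ.card_le_univ.trans_eq (by simp)
    have h2 : Real.logb 2 (1 + S ^ 2) ≤
        Real.logb 2 N + Real.logb 2 (1 + C) := by
      rw [← Real.logb_mul (by positivity) (by positivity)]
      apply Real.logb_le_logb_of_le one_lt_two (by positivity)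
      nlinarith
    linarith
  have hbdd : BddBelow (Set.range U) := Finite.bddBelow_range U
  obtain ⟨Λ₀, hΛ₀⟩ := Finite.exists_min R
  have h1 : (⨅ Λ : Finset (Fin N), R Λ) = R Λ₀ :=
    le_antisymm (ciInf_le (Finite.bddBelow_range R) Λ₀) (le_ciInf hΛ₀)
  have h2 : (⨅ Λ : Finset (Fin N), U Λ) ≤ U Λ₀ := ciInf_le hbdd Λ₀
  have := key Λ₀
  linarith
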